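/- Let (R,m) be a 1-dimensional Cohen–Macaulay Noetherian local ring, and let x foundation ∈ m satisfy m^{n+1} = x m^n for some n ≥ 0 (i.e., (x) is a reduction of m). Call a finitely generated R-module M Ulrich if M is maximal Cohen–Macaulay and mM = xM. Then the following are equivalent: (1) R is a regular local ring; (2) the Ulrich modules are closed under extensions, i.e., for every short exact sequence 0 → N → X → M → 0 of finitely generated R-modules with M and N Ulrich, the module X is Ulrich; (3) there exist Ulrich modules M and N with M ≠ 0 and N faithful such that for every short exact sequence 0 → N → X → M → 0 of finitely generated R-modules, X is Ulrich. -/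

import Mathlib

set_option linter.unusedSectionVars false
set_option linter.unusedVariables false
set_option maxHeartbeats 1000000

open IsLocalRing

/-- A local ring is regular if its maximal ideal is generated by `dim R` elements. -/
def IsRegularLocal (R : Type) [CommRing R] [IsLocalRing R] : Prop :=
  ∃ (n : ℕ) (x : Fin n → R), Ideal.span (Set.range x) = maximalIdeal R ∧
    ringKrullDim R = n

/-- Over a `1`-dimensional Cohen–Macaulay local ring with principal reduction `x` of `𝔪`,
a finitely generated module `M` is Ulrich if it is maximal Cohen–Macaulay (depth `1`,
i.e. some element of `𝔪` is `M`-regular) and `𝔪M = xM`. -/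
def IsUlrich (R : Type) [CommRing R] [IsLocalRing R] (x : R)
    (M : Type) [AddCommGroup M] [Module R M] : Prop :=
  Module.Finite R M ∧ (∃ y ∈ maximalIdeal R, IsSMulRegular M y) ∧
    maximalIdeal R • (⊤ : Submodule R M) = Ideal.span {x} • (⊤ : Submodule R M)

open Submodule Set

section Helpers

variable {R : Type} [CommRing R] [IsLocalRing R]

lemma aux_mem_span_smul_top {x : R} {P : Type} [AddCommGroup P] [Module R P] (p : P) :
    p ∈ Ideal.span {x} • (⊤ : Submodule R P) ↔ ∃ q : P, x • q = p := by
  rw [Submodule.ideal_span_singleton_smul]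
  constructor
  · intro h
    rw [← SetLike.mem_coe, Submodule.coe_pointwise_smul] at h
    obtain ⟨q, -, hq⟩ := h
    exact ⟨q, hq⟩
  · rintro ⟨q, rfl⟩
    exact Submodule.smul_mem_pointwise_smul q x ⊤ trivial

lemma aux_reg_of_mul {c t : R} {P : Type} [AddCommGroup P] [Module R P]
    (h : IsSMulRegular P (c * t)) : IsSMulRegular P t := by
  have hcomp : ((c * t) • · : P → P) = (c • ·) ∘ (t • ·) := funext fun p => mul_smul c t p
  have h' : Function.Injective ((c • ·) ∘ (t • ·) : P → P) := hcomp ▸ h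
  exact h'.of_comp

lemma aux_xreg {x : R}
    (hred : ∃ n : ℕ, maximalIdeal R ^ (n + 1) = Ideal.span {x} * maximalIdeal R ^ n)
    (P : Type) [AddCommGroup P] [Module R P]
    (h : ∃ y ∈ maximalIdeal R, IsSMulRegular P y) : IsSMulRegular P x := by
  obtain ⟨n, hn⟩ := hred
  obtain ⟨y, hy, hyreg⟩ := h
  have h1 : y ^ (n + 1) ∈ Ideal.span {x} * maximalIdeal R ^ n := by
    rw [← hn]; exact Ideal.pow_mem_pow hy (n + 1)
  obtain ⟨c, hc⟩ := Ideal.mem_span_singleton'.mp (Ideal.mul_le_left h1)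
  have h3 : IsSMulRegular P (c * x) := by rw [hc]; exact hyreg.pow (n + 1)
  exact aux_reg_of_mul h3

/-- If `𝔪 = (x)` then Ulrich modules are closed under extensions (in fact everything
finite with `x` acting regularly is Ulrich). -/
lemma aux_ulrich_ext {x : R} (hx : x ∈ maximalIdeal R)
    (hm : maximalIdeal R = Ideal.span {x})
    (hred : ∃ n : ℕ, maximalIdeal R ^ (n + 1) = Ideal.span {x} * maximalIdeal R ^ n)
    (N : Type) [AddCommGroup N] [Module R N]
    (M : Type) [AddCommGroup M] [Module R M]
    (X : Type) [AddCommGroup X] [Module R X] [Module.Finite R X]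
    (f : N →ₗ[R] X) (g : X →ₗ[R] M)
    (hN : IsUlrich R x N) (hM : IsUlrich R x M)
    (hf : Function.Injective f) (hg : Function.Surjective g) (hfg : Function.Exact f g) :
    IsUlrich R x X := by
  have hxN : IsSMulRegular N x := aux_xreg hred N hN.2.1
  have hxM : IsSMulRegular M x := aux_xreg hred M hM.2.1
  refine ⟨inferInstance, ⟨x, hx, ?_⟩, by rw [hm]⟩
  -- x is regular on X
  have key : ∀ z : X, x • z = 0 → z = 0 := by
    intro z hz
    have hgz : x • g z = 0 := by rw [← map_smul, hz, map_zero]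
    have hgz0 : g z = 0 := hxM (by simpa using hgz)
    obtain ⟨w, hw⟩ := (hfg z).mp hgz0
    have hfw : f (x • w) = 0 := by rw [map_smul, hw, hz]
    have hw0 : x • w = 0 := hf (by simpa using hfw)
    have : w = 0 := hxN (by simpa using hw0)
    rw [← hw, this, map_zero]
  intro a b hab
  have : x • (a - b) = 0 := by rw [smul_sub, sub_eq_zero]; exact hab
  have := key _ this
  exact sub_eq_zero.mp this

/-- regularity is equivalent to `𝔪 = (x)` in our setting. -/
lemma aux_reg_iff {x : R} [IsNoetherianRing R]
    (hdim : ringKrullDim R = 1) (hCM : ∃ y ∈ maximalIdeal R, IsSMulRegular R y)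
    (hx : x ∈ maximalIdeal R)
    (hred : ∃ n : ℕ, maximalIdeal R ^ (n + 1) = Ideal.span {x} * maximalIdeal R ^ n) :
    IsRegularLocal R ↔ maximalIdeal R = Ideal.span {x} := by
  constructor
  · rintro ⟨n, gens, hspan, hdimn⟩
    have h1 : (n : WithBot ℕ∞) = 1 := hdimn.symm.trans hdim
    have hn1 : n = 1 := by exact_mod_cast h1
    subst hn1
    set t := gens 0 with ht
    have hrange : Set.range gens = {t} := Set.range_unique
    have hm : maximalIdeal R = Ideal.span {t} := by rw [← hspan, hrange]
    have htm : t ∈ maximalIdeal R := by rw [hm]; exact Ideal.mem_span_singleton_self t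
    -- t is regular
    obtain ⟨y, hy, hyreg⟩ := hCM
    obtain ⟨c, hc⟩ := Ideal.mem_span_singleton'.mp (hm ▸ hy)
    have htreg : IsSMulRegular R t := aux_reg_of_mul (P := R) (by rw [hc]; exact hyreg)
    -- reduction equation
    obtain ⟨n₀, hn₀⟩ := hred
    have h2 : t ^ (n₀ + 1) ∈ Ideal.span {x} * maximalIdeal R ^ n₀ := by
      rw [← hn₀]; exact Ideal.pow_mem_pow htm (n₀ + 1)
    rw [hm, Ideal.span_singleton_pow, Ideal.span_singleton_mul_span_singleton] at h2
    obtain ⟨c₂, hc₂⟩ := Ideal.mem_span_singleton'.mp h2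
    -- cancel t ^ n₀
    have h3 : t ^ n₀ • (c₂ * x) = t ^ n₀ • t := by
      rw [smul_eq_mul, smul_eq_mul, ← pow_succ]
      rw [← hc₂]; ring
    have h4 : c₂ * x = t := (htreg.pow n₀) h3
    apply le_antisymm
    · rw [hm, Ideal.span_le, Set.singleton_subset_iff]
      exact Ideal.mem_span_singleton'.mpr ⟨c₂, h4⟩
    · rw [Ideal.span_le, Set.singleton_subset_iff]; exact hx
  · intro hm
    refine ⟨1, fun _ => x, ?_, by rw [hdim]; norm_num⟩
    rw [Set.range_unique, ← hm]


end Helpers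

section PowUlrich

variable {R : Type} [CommRing R] [IsLocalRing R] [IsNoetherianRing R]

/-- the ideal `𝔪 ^ n₀` is an Ulrich module. -/
lemma aux_pow_ulrich {x : R} {n₀ : ℕ}
    (hn₀ : maximalIdeal R ^ (n₀ + 1) = Ideal.span {x} * maximalIdeal R ^ n₀)
    (hCM : ∃ y ∈ maximalIdeal R, IsSMulRegular R y) :
    IsUlrich R x (↥(maximalIdeal R ^ n₀)) := by
  obtain ⟨y, hy, hyreg⟩ := hCM
  refine ⟨?_, ⟨y, hy, ?_⟩, ?_⟩
  · exact Module.Finite.iff_fg.mpr (IsNoetherian.noetherian _)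
  · -- y is regular on I
    intro a b hab
    have : y • (a : R) = y • (b : R) := congrArg Subtype.val hab
    exact Subtype.ext (hyreg this)
  · -- 𝔪 • ⊤ = (x) • ⊤ in I
    apply Submodule.map_injective_of_injective (injective_subtype (maximalIdeal R ^ n₀))
    rw [Submodule.map_smul'', Submodule.map_smul'', Submodule.map_top, Submodule.range_subtype]
    show maximalIdeal R • (maximalIdeal R ^ n₀) = Ideal.span {x} • (maximalIdeal R ^ n₀)
    rw [Ideal.smul_eq_mul, Ideal.smul_eq_mul]
    rw [← pow_succ']
    exact hn₀

lemma aux_pow_nontrivial {y : R} {n₀ : ℕ} (hy : y ∈ maximalIdeal R)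
    (hyreg : IsSMulRegular R y) : Nontrivial (↥(maximalIdeal R ^ n₀)) := by
  have hyn : y ^ n₀ ∈ maximalIdeal R ^ n₀ := Ideal.pow_mem_pow hy n₀
  have hne : y ^ n₀ ≠ 0 := by
    intro h
    have hreg := hyreg.pow n₀
    have : y ^ n₀ • (1 : R) = y ^ n₀ • (0 : R) := by simp [h]
    exact one_ne_zero (hreg this)
  exact ⟨⟨y ^ n₀, hyn⟩, 0, by simp [Subtype.ext_iff, hne]⟩

lemma aux_pow_faithful {y : R} {n₀ : ℕ} (hy : y ∈ maximalIdeal R)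
    (hyreg : IsSMulRegular R y) (r : R)
    (h : ∀ z : ↥(maximalIdeal R ^ n₀), r • z = 0) : r = 0 := by
  have hz := h ⟨y ^ n₀, Ideal.pow_mem_pow hy n₀⟩
  have : r • (y ^ n₀ : R) = 0 := congrArg Subtype.val hz
  have hreg := hyreg.pow n₀
  apply hreg
  simpa [smul_eq_mul, mul_comm] using this

end PowUlrich


section Core3

variable {R : Type} [CommRing R] [IsLocalRing R] [IsNoetherianRing R]

lemma aux_core3 {x : R} (hx : x ∈ maximalIdeal R)
    (hred : ∃ n : ℕ, maximalIdeal R ^ (n + 1) = Ideal.span {x} * maximalIdeal R ^ n)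
    (M : Type) [AddCommGroup M] [Module R M]
    (N : Type) [AddCommGroup N] [Module R N]
    (hM : IsUlrich R x M) (hN : IsUlrich R x N)
    (hMnt : Nontrivial M)
    (hNf : ∀ r : R, (∀ z : N, r • z = 0) → r = 0)
    (H : ∀ (X : Type) [AddCommGroup X] [Module R X] [Module.Finite R X]
      (f : N →ₗ[R] X) (g : X →ₗ[R] M),
      Function.Injective f → Function.Surjective g → Function.Exact f g →
      IsUlrich R x X) :
    maximalIdeal R = Ideal.span {x} := by
  classical
  haveI hMfin : Module.Finite R M := hM.1
  haveI hNfin : Module.Finite R N := hN.1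
  have hxM : IsSMulRegular M x := aux_xreg hred M hM.2.1
  have hxN : IsSMulRegular N x := aux_xreg hred N hN.2.1
  -- a minimal system of generators of M
  have hex : ∃ t : ℕ, ∃ w : Fin t → M, Submodule.span R (Set.range w) = ⊤ :=
    Module.Finite.exists_fin
  set t := Nat.find hex with htdef
  obtain ⟨w, hw⟩ : ∃ w : Fin t → M, Submodule.span R (Set.range w) = ⊤ :=
    Nat.find_spec hex
  -- the presentation
  let π : (Fin t → R) →ₗ[R] M :=
  { toFun := fun v => ∑ i, v i • w i
    map_add' := fun v₁ v₂ => by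
      simp only [Pi.add_apply, add_smul]
      rw [Finset.sum_add_distrib]
    map_smul' := fun r v => by
      simp only [Pi.smul_apply, smul_eq_mul, RingHom.id_apply, ← smul_smul]
      rw [Finset.smul_sum] }
  have hπapp : ∀ v, π v = ∑ i, v i • w i := fun _ => rfl
  have hπsurj : Function.Surjective π := by
    intro m
    have hm : m ∈ Submodule.span R (Set.range w) := by rw [hw]; trivial
    exact (mem_span_range_iff_exists_fun R).mp hm
  -- relations have coefficients in 𝔪
  have hcoef : ∀ v : Fin t → R, π v = 0 → ∀ i, v i ∈ maximalIdeal R := by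
    intro v hv i
    by_contra hvi
    have hunit : IsUnit (v i) := by
      by_contra hnu
      exact hvi ((IsLocalRing.mem_maximalIdeal _).mpr hnu)
    -- t ≥ 1
    have ht1 : 0 < t := i.pos
    have htt : t - 1 + 1 = t := Nat.succ_pred_eq_of_pos ht1
    -- reindex
    let c : Fin (t - 1 + 1) ≃ Fin t := finCongr htt
    let w'' : Fin (t - 1 + 1) → M := w ∘ c
    let v'' : Fin (t - 1 + 1) → R := v ∘ c
    let i' : Fin (t - 1 + 1) := c.symm i
    have hsum : ∑ j, v'' j • w'' j = 0 := by
      rw [← hv, hπapp]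
      exact Fintype.sum_equiv c _ _ (fun j => rfl)
    rw [Fin.sum_univ_succAbove _ i'] at hsum
    let w' : Fin (t - 1) → M := fun j => w'' (i'.succAbove j)
    have hvi' : v'' i' = v i := by simp [v'', i', c]
    have hwspan : Submodule.span R (Set.range w') = ⊤ := by
      rw [eq_top_iff, ← hw, Submodule.span_le]
      rintro _ ⟨j, rfl⟩
      have hj : w j = w'' (c.symm j) := by simp [w'', c]
      rw [hj]
      by_cases hji : c.symm j = i'
      · -- the removed generator
        rw [hji]
        have hu := hunit.unit
        have hexp : w'' i' = hunit.unit⁻¹ •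
            (∑ k : Fin (t - 1), (- v'' (i'.succAbove k)) • w'' (i'.succAbove k)) := by
          have h1 : (v i) • w'' i' = ∑ k : Fin (t - 1),
              (- v'' (i'.succAbove k)) • w'' (i'.succAbove k) := by
            rw [← hvi']
            have := hsum
            rw [add_eq_zero_iff_eq_neg] at this
            rw [this]
            rw [← Finset.sum_neg_distrib]
            exact Finset.sum_congr rfl (fun k _ => by rw [neg_smul])
          rw [← h1, ← smul_assoc]
          norm_num [Units.smul_def, ← mul_smul]
        rw [hexp]
        apply Submodule.smul_mem
        apply Submodule.sum_mem
        intro k _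
        apply Submodule.smul_mem
        apply Submodule.subset_span
        exact ⟨k, rfl⟩
      · obtain ⟨k, hk⟩ := Fin.exists_succAbove_eq hji
        apply Submodule.subset_span
        exact ⟨k, by rw [← hk]⟩
    -- contradiction with minimality
    have : t - 1 < t := Nat.sub_lt ht1 one_pos
    exact Nat.find_min hex this ⟨w', hwspan⟩
  -- the syzygy module
  set K := LinearMap.ker π with hKdef
  have hKcoef : ∀ z : K, ∀ i, (z : Fin t → R) i ∈ maximalIdeal R :=
    fun z i => hcoef z (LinearMap.mem_ker.mp z.2) i
  -- Main extraction: for every linear map h : K → N, every value of h is divisible by x.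
  have extract : ∀ (h : K →ₗ[R] N) (z : K), ∃ n' : N, h z = x • n' := by
    intro h z
    -- the pushout extension
    set W : Submodule R (N × (Fin t → R)) := LinearMap.range (LinearMap.prod h (-K.subtype))
      with hWdef
    set X := (N × (Fin t → R)) ⧸ W with hXdef
    haveI : Module.Finite R X := Module.Finite.of_surjective (W.mkQ) (W.mkQ_surjective)
    set f : N →ₗ[R] X := W.mkQ.comp (LinearMap.inl R N (Fin t → R)) with hfdef
    have hle : W ≤ LinearMap.ker (π.comp (LinearMap.snd R N (Fin t → R))) := by
      rintro _ ⟨z', rfl⟩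
      simp only [LinearMap.mem_ker, LinearMap.comp_apply, LinearMap.prod_apply, LinearMap.snd_apply,
        Function.prod, LinearMap.neg_apply, Submodule.coe_subtype, map_neg]
      rw [neg_eq_zero]
      exact LinearMap.mem_ker.mp z'.2
    set g : X →ₗ[R] M := W.liftQ (π.comp (LinearMap.snd R N (Fin t → R))) hle with hgdef
    have hg_mk : ∀ p : N × (Fin t → R), g (W.mkQ p) = π p.2 := fun p => rfl
    have hf_app : ∀ n : N, f n = W.mkQ (n, 0) := fun n => rfl
    -- injectivity of f
    have hfinj : Function.Injective f := by
      have : LinearMap.ker f = ⊥ := by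
        rw [eq_bot_iff]
        intro n hn
        have h0 : W.mkQ (n, 0) = 0 := LinearMap.mem_ker.mp hn
        rw [Submodule.mkQ_apply, Submodule.Quotient.mk_eq_zero] at h0
        obtain ⟨z', hz'⟩ := h0
        have h1 : -(z' : Fin t → R) = 0 := congrArg Prod.snd hz'
        have h2 : z' = 0 := by
          apply Subtype.ext
          simpa [neg_eq_zero] using h1
        have h3 : (n : N) = h z' := (congrArg Prod.fst hz').symm
        rw [h2, map_zero] at h3
        simpa using h3
      exact LinearMap.ker_eq_bot.mp this
    -- surjectivity of g
    have hgsurj : Function.Surjective g := by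
      intro m
      obtain ⟨v, hv⟩ := hπsurj m
      exact ⟨W.mkQ (0, v), hv ▸ hg_mk (0, v)⟩
    -- exactness
    have hexact : Function.Exact f g := by
      rw [LinearMap.exact_iff]
      apply le_antisymm
      · intro q hq
        obtain ⟨⟨nn, v⟩, rfl⟩ := W.mkQ_surjective q
        have hv : π v = 0 := LinearMap.mem_ker.mp hq
        refine ⟨nn + h ⟨v, LinearMap.mem_ker.mpr hv⟩, ?_⟩
        rw [hf_app, Submodule.mkQ_apply, Submodule.mkQ_apply, Submodule.Quotient.eq]
        refine ⟨⟨v, LinearMap.mem_ker.mpr hv⟩, ?_⟩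
        simp only [LinearMap.prod_apply, Function.prod, LinearMap.neg_apply, Submodule.coe_subtype]
        rw [Prod.ext_iff]
        constructor
        · show h _ = (nn + h _) - nn
          abel
        · show -v = 0 - v
          abel
      · rintro _ ⟨n, rfl⟩
        rw [LinearMap.mem_ker, hf_app, hg_mk]
        exact map_zero π
    -- apply the hypothesis
    have hUX := H X f g hfinj hgsurj hexact
    have hsm : maximalIdeal R • (⊤ : Submodule R X) = Ideal.span {x} • (⊤ : Submodule R X) :=
      hUX.2.2
    -- the class of (0, v) lies in 𝔪X
    set v : Fin t → R := (z : Fin t → R) with hvdef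
    have hmem : W.mkQ (0, v) ∈ maximalIdeal R • (⊤ : Submodule R X) := by
      have hv1 : ((0 : N), v) = ∑ i, v i • ((((0 : N), Pi.single i (1 : R))) : N × (Fin t → R)) := by
        rw [Prod.ext_iff]
        constructor
        · rw [Prod.fst_sum]
          simp
        · show v = (∑ i, v i • ((((0 : N), Pi.single i (1 : R))) : N × (Fin t → R))).2
          rw [Prod.snd_sum]
          simp only [Prod.smul_mk]
          show v = ∑ i, v i • (Pi.single i (1 : R) : Fin t → R)
          rw [Finset.sum_congr rfl (fun i _ => by
            rw [← Pi.single_smul i (v i) 1, smul_eq_mul, mul_one])]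
          rw [Finset.univ_sum_single]
      rw [hv1, map_sum]
      apply Submodule.sum_mem
      intro i _
      rw [map_smul]
      exact Submodule.smul_mem_smul (hKcoef z i) trivial
    rw [hsm] at hmem
    obtain ⟨q, hq⟩ := (aux_mem_span_smul_top _).mp hmem
    obtain ⟨⟨nq, uq⟩, rfl⟩ := W.mkQ_surjective q
    -- bring to the form of a membership in W
    have hq2 : (x • nq - 0, x • uq - v) ∈ W := by
      have : W.mkQ (x • (nq, uq)) = W.mkQ (0, v) := by rwa [map_smul]
      rw [Submodule.mkQ_apply, Submodule.mkQ_apply, Submodule.Quotient.eq] at this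
      simpa [Prod.smul_mk, Prod.sub_def] using this
    obtain ⟨z', hz'⟩ := hq2
    have e1 : h z' = x • nq := by
      have := congrArg Prod.fst hz'
      simpa using this
    have e2 : -(z' : Fin t → R) = x • uq - v := by
      have := congrArg Prod.snd hz'
      simpa using this
    -- uq is a syzygy
    have h6 : (z' : Fin t → R) = v - x • uq := by
      rw [← neg_neg ((z' : Fin t → R)), e2]; abel
    have huq : π uq = 0 := by
      have h4 : π ((z' : Fin t → R)) = 0 := LinearMap.mem_ker.mp z'.2
      have h5 : π v = 0 := LinearMap.mem_ker.mp z.2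
      rw [h6, map_sub, map_smul, h5] at h4
      have h7 : x • π uq = 0 := by
        rw [← neg_eq_zero, ← h4]; abel
      exact hxM (by simpa using h7)
    -- assemble
    have hzu : uq ∈ K := LinearMap.mem_ker.mpr huq
    have hzz : z = z' + x • (⟨uq, hzu⟩ : K) := by
      apply Subtype.ext
      show v = (z' : Fin t → R) + x • uq
      rw [h6]; abel
    refine ⟨nq + h ⟨uq, hzu⟩, ?_⟩
    rw [hzz, map_add, map_smul, e1, smul_add]
  -- induction: syzygy coordinates act on N divisibly by all powers of x
  have hind : ∀ k : ℕ, ∀ z : K, ∀ i : Fin t, ∀ n₀ : N,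
      ∃ n' : N, (z : Fin t → R) i • n₀ = (x ^ k) • n' := by
    intro k
    induction k with
    | zero => intro z i n₀; exact ⟨(z : Fin t → R) i • n₀, by simp⟩
    | succ k ih =>
      intro z i n₀
      have hxk : IsSMulRegular N (x ^ k) := hxN.pow k
      let φ : K → N := fun z' => (ih z' i n₀).choose
      have hφ : ∀ z' : K, (z' : Fin t → R) i • n₀ = (x ^ k) • φ z' :=
        fun z' => (ih z' i n₀).choose_spec
      let hmap : K →ₗ[R] N :=
      { toFun := φ
        map_add' := by
          intro z₁ z₂
          apply hxk
          show (x ^ k) • φ (z₁ + z₂) = (x ^ k) • (φ z₁ + φ z₂)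
          rw [← hφ, smul_add, ← hφ, ← hφ]
          show ((z₁ : Fin t → R) + (z₂ : Fin t → R)) i • n₀ = _ + _
          rw [Pi.add_apply, add_smul]
        map_smul' := by
          intro r z₁
          apply hxk
          show (x ^ k) • φ (r • z₁) = (x ^ k) • (r • φ z₁)
          rw [← hφ]
          show (r • (z₁ : Fin t → R)) i • n₀ = (x ^ k) • (r • φ z₁)
          rw [Pi.smul_apply, smul_eq_mul, mul_smul, hφ z₁, smul_comm] }
      obtain ⟨n'', hn''⟩ := extract hmap z
      refine ⟨n'', ?_⟩
      have h9 : (z : Fin t → R) i • n₀ = (x ^ k) • (hmap z) := hφ z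
      rw [h9]
      show (x ^ k) • (φ z) = (x ^ (k + 1)) • n''
      have : φ z = hmap z := rfl
      rw [this, hn'', smul_smul, ← pow_succ]
  -- therefore all syzygy coordinates vanish
  have hzero : ∀ z : K, ∀ i : Fin t, (z : Fin t → R) i = 0 := by
    intro z i
    apply hNf
    intro n₀
    have hbot : (⨅ k : ℕ, (maximalIdeal R) ^ k • (⊤ : Submodule R N)) = ⊥ :=
      Ideal.iInf_pow_smul_eq_bot_of_isLocalRing (maximalIdeal R)
        (Ideal.IsMaximal.ne_top (IsLocalRing.maximalIdeal.isMaximal R))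
    have hmem : (z : Fin t → R) i • n₀ ∈
        (⨅ k : ℕ, (maximalIdeal R) ^ k • (⊤ : Submodule R N)) := by
      rw [Submodule.mem_iInf]
      intro k
      obtain ⟨n', hn'⟩ := hind k z i n₀
      rw [hn']
      exact Submodule.smul_mem_smul (Ideal.pow_mem_pow hx k) trivial
    rw [hbot] at hmem
    simpa using hmem
  -- so π is injective
  have hπinj : Function.Injective π := by
    rw [← LinearMap.ker_eq_bot, eq_bot_iff]
    intro v hv
    have hv0 : v = 0 := funext fun i => hzero ⟨v, hv⟩ i
    simp [hv0]
  -- t ≥ 1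
  have ht : 0 < t := by
    rcases Nat.eq_zero_or_pos t with h0 | h
    · exfalso
      haveI : Subsingleton (Fin t → R) := by rw [h0]; infer_instance
      have hsub : Subsingleton M := by
        constructor
        intro a b
        obtain ⟨va, hva⟩ := hπsurj a
        obtain ⟨vb, hvb⟩ := hπsurj b
        rw [← hva, ← hvb, Subsingleton.elim va vb]
      exact not_subsingleton M hsub
    · exact h
  -- conclude that 𝔪 = (x)
  apply le_antisymm
  · intro a ha
    set i₁ : Fin t := ⟨0, ht⟩
    have h5 : a • (π (Pi.single i₁ 1 : Fin t → R)) ∈ maximalIdeal R • (⊤ : Submodule R M) :=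
      Submodule.smul_mem_smul ha trivial
    rw [hM.2.2] at h5
    obtain ⟨q, hq⟩ := (aux_mem_span_smul_top _).mp h5
    obtain ⟨uq, rfl⟩ := hπsurj q
    have h7 : x • uq = a • (Pi.single i₁ 1 : Fin t → R) := by
      apply hπinj
      rw [map_smul, map_smul, hq]
    have h8 := congrFun h7 i₁
    simp only [Pi.smul_apply, smul_eq_mul, Pi.single_eq_same, mul_one] at h8
    exact Ideal.mem_span_singleton'.mpr ⟨uq i₁, by rw [mul_comm]; exact h8⟩
  · rw [Ideal.span_le, Set.singleton_subset_iff]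
    exact hx

end Core3


/-- Let `(R,𝔪)` be a `1`-dimensional Cohen–Macaulay Noetherian local ring and `x ∈ 𝔪`
with `𝔪^{n+1} = x𝔪^n` for some `n`.  TFAE:
(1) `R` is regular;
(2) the Ulrich modules are closed under extensions;
(3) there are Ulrich modules `M ≠ 0` and `N` faithful such that the middle term of every
short exact sequence `0 → N → X → M → 0` is Ulrich. -/
theorem stmt16 (R : Type) [CommRing R] [IsLocalRing R] [IsNoetherianRing R]
    (hdim : ringKrullDim R = 1) (hCM : ∃ y ∈ maximalIdeal R, IsSMulRegular R y)
    (x : R) (hx : x ∈ maximalIdeal R)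
    (hred : ∃ n : ℕ, maximalIdeal R ^ (n + 1) = Ideal.span {x} * maximalIdeal R ^ n) :
    (IsRegularLocal R ↔
      (∀ (N : Type) [AddCommGroup N] [Module R N]
        (M : Type) [AddCommGroup M] [Module R M]
        (X : Type) [AddCommGroup X] [Module R X] [Module.Finite R X]
        (f : N →ₗ[R] X) (g : X →ₗ[R] M),
        IsUlrich R x N → IsUlrich R x M →
        Function.Injective f → Function.Surjective g → Function.Exact f g →
        IsUlrich R x X)) ∧
    (IsRegularLocal R ↔
      (∃ M N : ModuleCat.{0} R, IsUlrich R x ↥M ∧ IsUlrich R x ↥N ∧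
        Nontrivial ↥M ∧ (∀ r : R, (∀ z : ↥N, r • z = 0) → r = 0) ∧
        ∀ (X : Type) [AddCommGroup X] [Module R X] [Module.Finite R X]
          (f : ↥N →ₗ[R] X) (g : X →ₗ[R] ↥M),
          Function.Injective f → Function.Surjective g → Function.Exact f g →
          IsUlrich R x X)) := by
  constructor
  · constructor
    · intro hreg
      have hm := (aux_reg_iff hdim hCM hx hred).mp hreg
      intro N _ _ M _ _ X _ _ _ f g hN hM hf hg hfg
      exact aux_ulrich_ext hx hm hred N M X f g hN hM hf hg hfg
    · intro H2
      apply (aux_reg_iff hdim hCM hx hred).mpr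
      obtain ⟨n₀, hn₀⟩ := hred
      obtain ⟨y, hy, hyreg⟩ := hCM
      have hI := aux_pow_ulrich hn₀ ⟨y, hy, hyreg⟩
      refine aux_core3 hx ⟨n₀, hn₀⟩ (↥(maximalIdeal R ^ n₀)) (↥(maximalIdeal R ^ n₀)) hI hI
        (aux_pow_nontrivial hy hyreg) (aux_pow_faithful hy hyreg) ?_
      intro X _ _ _ f g hf hg hfg
      exact H2 _ _ X f g hI hI hf hg hfg
  · constructor
    · intro hreg
      have hm := (aux_reg_iff hdim hCM hx hred).mp hreg
      have hUR : IsUlrich R x R := ⟨inferInstance, hCM, by rw [hm]⟩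
      refine ⟨ModuleCat.of R R, ModuleCat.of R R, hUR, hUR, inferInstanceAs (Nontrivial R),
        ?_, ?_⟩
      · intro r hr
        have := hr (1 : R)
        simpa using this
      · intro X _ _ _ f g hf hg hfg
        exact aux_ulrich_ext hx hm hred R R X f g hUR hUR hf hg hfg
    · rintro ⟨M, N, hM, hN, hnt, hfa, H⟩
      exact (aux_reg_iff hdim hCM hx hred).mpr (aux_core3 hx hred (↥M) (↥N) hM hN hnt hfa H)
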